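/- For a density matrix ρ with sorted eigenvalue vector λ↓(ρ) and a Hermitian matrix A with sorted eigenvalue vectors λ↓(A) (nonincreasing) and λ↑(A) (nondecreasing), the set of achievable values {tr(UρU† A) : U unitary} is the closed real interval [λ↓(ρ)·λ↑(A), λ↓(ρ)·λ↓(A)]. -/

import Mathlib

open Matrix ComplexOrder

/-- `x` rearranged in nondecreasing order. -/
noncomputable def sortAsc {n : ℕ} (x : Fin n → ℝ) : Fin n → ℝ := x ∘ (Tuple.sort x)

/-- `x` rearranged in nonincreasing order. -/
noncomputable def sortDesc {n : ℕ} (x : Fin n → ℝ) : Fin n → ℝ := fun i => sortAsc x i.rev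

section Aux

variable {n : ℕ}

/-! ### Permutation matrix lemmas -/

lemma permMatrix_mul' (σ τ : Equiv.Perm (Fin n)) :
    (σ.permMatrix ℂ) * (τ.permMatrix ℂ) = ((τ * σ).permMatrix ℂ) := by
  rw [Equiv.Perm.permMatrix, Equiv.Perm.permMatrix, ← PEquiv.toMatrix_trans,
    ← Equiv.toPEquiv_trans]
  rfl

lemma permMatrix_one' : ((1 : Equiv.Perm (Fin n)).permMatrix ℂ) = 1 := by
  show (Equiv.refl (Fin n)).toPEquiv.toMatrix = 1
  rw [Equiv.toPEquiv_refl, PEquiv.toMatrix_refl]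

lemma permMatrix_conjTranspose' (σ : Equiv.Perm (Fin n)) :
    (σ.permMatrix ℂ)ᴴ = (σ⁻¹).permMatrix ℂ := by
  ext i j
  simp only [conjTranspose_apply, Equiv.Perm.permMatrix, PEquiv.toMatrix_apply,
    Equiv.toPEquiv_apply, Option.mem_def, Option.some.injEq]
  have h2 : (σ j = i) ↔ (σ⁻¹ i = j) := ⟨fun h => by simp [← h], fun h => by simp [← h]⟩
  by_cases h : σ j = i
  · simp [h, h2.mp h]
  · rw [if_neg (fun hc => h (h2.mpr hc))]
    simp [h]

lemma permMatrix_mem_unitaryGroup' (σ : Equiv.Perm (Fin n)) :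
    σ.permMatrix ℂ ∈ Matrix.unitaryGroup (Fin n) ℂ := by
  rw [Matrix.mem_unitaryGroup_iff, star_eq_conjTranspose, permMatrix_conjTranspose',
    permMatrix_mul']
  simp [permMatrix_one']

/-! ### A continuous path of unitaries from the identity to any permutation matrix -/

noncomputable def rotA (t : ℝ) : ℂ :=
  (Real.cos (Real.pi/2 * t) : ℂ) * Complex.exp (-(Real.pi/2 * t : ℝ) * Complex.I)

noncomputable def rotB (t : ℝ) : ℂ :=
  (Real.sin (Real.pi/2 * t) : ℂ) * Complex.I * Complex.exp (-(Real.pi/2 * t : ℝ) * Complex.I)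

lemma star_exp_neg_I (θ : ℝ) : star (Complex.exp (-(θ:ℂ) * Complex.I)) =
    Complex.exp ((θ:ℂ) * Complex.I) := by
  rw [Complex.star_def, ← Complex.exp_conj]
  congr 1
  simp [Complex.conj_ofReal]

lemma exp_mul_star_exp (θ : ℝ) : Complex.exp (-(θ:ℂ) * Complex.I) *
    star (Complex.exp (-(θ:ℂ) * Complex.I)) = 1 := by
  rw [star_exp_neg_I, ← Complex.exp_add]
  ring_nf
  exact Complex.exp_zero

lemma rot_norm (t : ℝ) : rotA t * star (rotA t) + rotB t * star (rotB t) = 1 := by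
  unfold rotA rotB
  have hu := exp_mul_star_exp (Real.pi/2 * t)
  have hcs : ((Real.cos (Real.pi/2*t) : ℂ))^2 + ((Real.sin (Real.pi/2*t) : ℂ))^2 = 1 :=
    mod_cast Real.cos_sq_add_sin_sq (Real.pi/2*t)
  simp only [star_mul', show star Complex.I = -Complex.I from by simp,
    show ∀ r : ℝ, star (r:ℂ) = (r:ℂ) from fun r => by simp]
  linear_combination (((Real.cos (Real.pi/2*t) : ℂ))^2 + ((Real.sin (Real.pi/2*t) : ℂ))^2) * hu + hcs
    - (Complex.exp (-(Real.pi/2 * t : ℝ) * Complex.I) *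
        star (Complex.exp (-(Real.pi/2 * t : ℝ) * Complex.I)) *
        ((Real.sin (Real.pi/2*t) : ℂ))^2) * Complex.I_sq

lemma rot_cross (t : ℝ) : rotA t * star (rotB t) + rotB t * star (rotA t) = 0 := by
  unfold rotA rotB
  simp only [star_mul', show star Complex.I = -Complex.I from by simp,
    show ∀ r : ℝ, star (r:ℂ) = (r:ℂ) from fun r => by simp]
  ring

lemma rotA_zero : rotA 0 = 1 := by simp [rotA]
lemma rotB_zero : rotB 0 = 0 := by simp [rotB]
lemma rotA_one : rotA 1 = 0 := by simp [rotA, Real.cos_pi_div_two]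
lemma rotB_one : rotB 1 = 1 := by
  have h : Complex.exp (-(Real.pi/2 * 1 : ℝ) * Complex.I) = -Complex.I := by
    rw [show (-(Real.pi/2 * 1 : ℝ) : ℂ) * Complex.I = (-(Real.pi/2) : ℂ) * Complex.I by
      push_cast; ring, Complex.exp_mul_I]
    rw [show ((-(Real.pi/2) : ℂ)) = ((-(Real.pi/2) : ℝ) : ℂ) by push_cast; ring]
    rw [← Complex.ofReal_cos, ← Complex.ofReal_sin]
    simp [Real.cos_pi_div_two, Real.sin_pi_div_two]
  rw [rotB, h]
  simp [Real.sin_pi_div_two]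

lemma rotA_continuous : Continuous rotA := by unfold rotA; fun_prop
lemma rotB_continuous : Continuous rotB := by unfold rotB; fun_prop

noncomputable def rotM (x y : Fin n) (t : ℝ) : Matrix (Fin n) (Fin n) ℂ :=
  rotA t • 1 + rotB t • ((Equiv.swap x y).permMatrix ℂ)

lemma swap_sq (x y : Fin n) :
    ((Equiv.swap x y).permMatrix ℂ) * ((Equiv.swap x y).permMatrix ℂ) = 1 := by
  rw [permMatrix_mul', Equiv.swap_mul_self, permMatrix_one']

lemma rotM_mem (x y : Fin n) (t : ℝ) : rotM x y t ∈ Matrix.unitaryGroup (Fin n) ℂ := by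
  rw [Matrix.mem_unitaryGroup_iff, star_eq_conjTranspose]
  have hP : ((Equiv.swap x y).permMatrix ℂ)ᴴ = (Equiv.swap x y).permMatrix ℂ := by
    rw [permMatrix_conjTranspose', Equiv.swap_inv]
  have expand : rotM x y t * (rotM x y t)ᴴ =
      (rotA t * star (rotA t) + rotB t * star (rotB t)) • (1 : Matrix (Fin n) (Fin n) ℂ) +
      (rotA t * star (rotB t) + rotB t * star (rotA t)) • ((Equiv.swap x y).permMatrix ℂ) := by
    simp only [rotM, conjTranspose_add, conjTranspose_smul, conjTranspose_one, hP,
      Matrix.add_mul, Matrix.mul_add, Matrix.smul_mul, Matrix.mul_smul, smul_smul,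
      Matrix.mul_one, Matrix.one_mul, swap_sq, add_smul]
    module
  rw [expand, rot_norm, rot_cross]
  simp

lemma rotM_continuous (x y : Fin n) : Continuous (rotM x y) :=
  (rotA_continuous.smul continuous_const).add (rotB_continuous.smul continuous_const)

lemma rotM_zero (x y : Fin n) : rotM x y 0 = 1 := by simp [rotM, rotA_zero, rotB_zero]

lemma rotM_one (x y : Fin n) : rotM x y 1 = (Equiv.swap x y).permMatrix ℂ := by
  simp [rotM, rotA_one, rotB_one]

lemma exists_unitary_path (π : Equiv.Perm (Fin n)) :
    ∃ Q : ℝ → Matrix (Fin n) (Fin n) ℂ, Continuous Q ∧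
      (∀ t, Q t ∈ Matrix.unitaryGroup (Fin n) ℂ) ∧ Q 0 = 1 ∧ Q 1 = π.permMatrix ℂ := by
  refine Equiv.Perm.swap_induction_on π
    ⟨fun _ => 1, continuous_const, fun _ => Submonoid.one_mem _, rfl, permMatrix_one'.symm⟩ ?_
  rintro f x y hne ⟨Q, hQc, hQm, hQ0, hQ1⟩
  refine ⟨fun t => Q t * rotM x y t, hQc.mul (rotM_continuous x y),
    fun t => Submonoid.mul_mem _ (hQm t) (rotM_mem x y t), ?_, ?_⟩
  · show Q 0 * rotM x y 0 = 1
    rw [hQ0, rotM_zero, one_mul]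
  · show Q 1 * rotM x y 1 = _
    rw [hQ1, rotM_one, permMatrix_mul']

/-! ### Sorting and rearrangement -/

lemma monotone_sortAsc (x : Fin n → ℝ) : Monotone (sortAsc x) := Tuple.monotone_sort x

lemma antitone_sortDesc (x : Fin n → ℝ) : Antitone (sortDesc x) := by
  intro i j hij
  exact monotone_sortAsc x (by simpa using hij)

/-- the permutation with `x ∘ descPerm x = sortDesc x` -/
noncomputable def descPerm (x : Fin n → ℝ) : Equiv.Perm (Fin n) :=
  (Fin.revPerm).trans (Tuple.sort x)

lemma comp_descPerm (x : Fin n → ℝ) (i : Fin n) : x (descPerm x i) = sortDesc x i := by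
  simp [descPerm, sortDesc, sortAsc]

lemma comp_sortPerm (x : Fin n → ℝ) (i : Fin n) : x (Tuple.sort x i) = sortAsc x i := rfl

lemma sum_perm_le (p a : Fin n → ℝ) (σ : Equiv.Perm (Fin n)) :
    ∑ j, p (σ j) * a j ≤ ∑ i, sortDesc p i * sortDesc a i := by
  have h1 : ∑ j, p (σ j) * a j = ∑ k, sortDesc a k •
      sortDesc p (((descPerm a).trans (σ.trans (descPerm p).symm)) k) := by
    rw [← Equiv.sum_comp (descPerm a) (fun j => p (σ j) * a j)]
    refine Finset.sum_congr rfl fun k _ => ?_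
    rw [smul_eq_mul, mul_comm, ← comp_descPerm p, ← comp_descPerm a]
    simp
  rw [h1]
  have := (Antitone.monovary (antitone_sortDesc a)
    (antitone_sortDesc p)).sum_smul_comp_perm_le_sum_smul
    (σ := (descPerm a).trans (σ.trans (descPerm p).symm))
  simpa [mul_comm] using this

lemma le_sum_perm (p a : Fin n → ℝ) (σ : Equiv.Perm (Fin n)) :
    ∑ i, sortDesc p i * sortAsc a i ≤ ∑ j, p (σ j) * a j := by
  have h1 : ∑ j, p (σ j) * a j = ∑ k, sortAsc a k •
      sortDesc p (((Tuple.sort a).trans (σ.trans (descPerm p).symm)) k) := by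
    rw [← Equiv.sum_comp (Tuple.sort a) (fun j => p (σ j) * a j)]
    refine Finset.sum_congr rfl fun k _ => ?_
    rw [smul_eq_mul, mul_comm, ← comp_descPerm p, ← comp_sortPerm a]
    simp
  rw [h1]
  have := (Monotone.antivary (monotone_sortAsc a)
    (antitone_sortDesc p)).sum_smul_le_sum_smul_comp_perm
    (σ := (Tuple.sort a).trans (σ.trans (descPerm p).symm))
  simpa [mul_comm] using this

lemma exists_perm_hi (p a : Fin n → ℝ) :
    ∃ σ : Equiv.Perm (Fin n), ∑ j, p (σ j) * a j = ∑ i, sortDesc p i * sortDesc a i := by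
  refine ⟨(descPerm a).symm.trans (descPerm p), ?_⟩
  rw [← Equiv.sum_comp (descPerm a) (fun j => p (((descPerm a).symm.trans (descPerm p)) j) * a j)]
  refine Finset.sum_congr rfl fun k _ => ?_
  rw [← comp_descPerm p, ← comp_descPerm a]
  simp

lemma exists_perm_lo (p a : Fin n → ℝ) :
    ∃ σ : Equiv.Perm (Fin n), ∑ j, p (σ j) * a j = ∑ i, sortDesc p i * sortAsc a i := by
  refine ⟨(Tuple.sort a).symm.trans (descPerm p), ?_⟩
  rw [← Equiv.sum_comp (Tuple.sort a)
    (fun j => p (((Tuple.sort a).symm.trans (descPerm p)) j) * a j)]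
  refine Finset.sum_congr rfl fun k _ => ?_
  rw [← comp_descPerm p, ← comp_sortPerm a]
  simp

/-! ### The trace functional -/

noncomputable def traceF (p a : Fin n → ℝ) (M : Matrix (Fin n) (Fin n) ℂ) : ℝ :=
  ∑ i, ∑ j, p i * a j * ‖M j i‖^2

lemma traceF_continuous (p a : Fin n → ℝ) : Continuous (traceF p a) := by
  unfold traceF
  refine continuous_finset_sum _ fun i _ => continuous_finset_sum _ fun j _ => ?_
  exact continuous_const.mul (((continuous_apply_apply j i).norm).pow 2)

lemma traceF_perm (p a : Fin n → ℝ) (σ : Equiv.Perm (Fin n)) :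
    traceF p a (σ.permMatrix ℂ) = ∑ j, p (σ j) * a j := by
  unfold traceF
  rw [Finset.sum_comm]
  refine Finset.sum_congr rfl fun j _ => ?_
  have hentry : ∀ i, ‖(σ.permMatrix ℂ) j i‖^2 = if σ j = i then 1 else 0 := fun i => by
    simp only [Equiv.Perm.permMatrix, PEquiv.toMatrix_apply, Equiv.toPEquiv_apply,
      Option.mem_def, Option.some.injEq]
    split <;> simp
  simp only [hentry, mul_ite, mul_one, mul_zero]
  simp

lemma norm_sq_eq_star_mul_self_re (z : ℂ) : ‖z‖^2 = (star z * z).re := by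
  rw [Complex.star_def, mul_comm, Complex.mul_conj]
  simp [Complex.sq_norm]

lemma star_mul_self_eq_norm_sq (z : ℂ) : star z * z = ((‖z‖^2 : ℝ) : ℂ) := by
  rw [Complex.star_def, mul_comm, Complex.mul_conj]
  norm_cast
  simp [Complex.sq_norm]

lemma unistochastic {M : Matrix (Fin n) (Fin n) ℂ} (hM : M ∈ Matrix.unitaryGroup (Fin n) ℂ) :
    (Matrix.of fun i j => ‖M j i‖^2) ∈ doublyStochastic ℝ (Fin n) := by
  have h1 : star M * M = 1 := mem_unitaryGroup_iff'.mp hM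
  have h2 : M * star M = 1 := mem_unitaryGroup_iff.mp hM
  rw [mem_doublyStochastic_iff_sum]
  refine ⟨fun i j => by simp only [Matrix.of_apply]; positivity, fun i => ?_, fun j => ?_⟩
  · have h := congrArg (fun N => (N i i).re) h1
    simp only [Matrix.mul_apply, Matrix.star_apply, Matrix.one_apply_eq, Complex.one_re] at h
    simp only [Matrix.of_apply]
    rw [← h, Complex.re_sum]
    exact Finset.sum_congr rfl fun j _ => norm_sq_eq_star_mul_self_re _
  · have h := congrArg (fun N => (N j j).re) h2
    simp only [Matrix.mul_apply, Matrix.star_apply, Matrix.one_apply_eq, Complex.one_re] at h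
    simp only [Matrix.of_apply]
    rw [← h, Complex.re_sum]
    refine Finset.sum_congr rfl fun i _ => ?_
    rw [norm_sq_eq_star_mul_self_re]
    ring_nf

lemma sum_sum_permMatrix (p a : Fin n → ℝ) (σ : Equiv.Perm (Fin n)) :
    ∑ i, ∑ j, p i * a j * (σ.permMatrix ℝ) i j = ∑ j, p (σ.symm j) * a j := by
  have h : ∑ i, ∑ j, p i * a j * (σ.permMatrix ℝ) i j = ∑ i, p i * a (σ i) := by
    refine Finset.sum_congr rfl fun i _ => ?_
    simp only [Equiv.Perm.permMatrix, PEquiv.toMatrix_apply, Equiv.toPEquiv_apply,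
      Option.mem_def, Option.some.injEq, mul_ite, mul_one, mul_zero]
    simp
  rw [h, ← Equiv.sum_comp σ.symm (fun i => p i * a (σ i))]
  simp

lemma traceF_mem_Icc (p a : Fin n → ℝ) {M : Matrix (Fin n) (Fin n) ℂ}
    (hM : M ∈ Matrix.unitaryGroup (Fin n) ℂ) :
    traceF p a M ∈ Set.Icc (∑ i, sortDesc p i * sortAsc a i)
      (∑ i, sortDesc p i * sortDesc a i) := by
  obtain ⟨w, hw0, hw1, hwM⟩ := exists_eq_sum_perm_of_mem_doublyStochastic (unistochastic hM)
  have key : traceF p a M = ∑ σ : Equiv.Perm (Fin n), w σ * ∑ j, p (σ.symm j) * a j := by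
    have hM2 : ∀ i j, ‖M j i‖^2 = ∑ σ : Equiv.Perm (Fin n), w σ * (σ.permMatrix ℝ) i j := by
      intro i j
      have := congrArg (fun N => N i j) hwM
      simpa [Matrix.sum_apply, Matrix.smul_apply, smul_eq_mul] using this.symm
    unfold traceF
    simp only [hM2, Finset.mul_sum]
    have swap1 : ∀ i : Fin n, ∑ j, ∑ σ : Equiv.Perm (Fin n),
        p i * a j * (w σ * (σ.permMatrix ℝ) i j)
        = ∑ σ : Equiv.Perm (Fin n), ∑ j, p i * a j * (w σ * (σ.permMatrix ℝ) i j) :=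
      fun i => Finset.sum_comm
    simp only [swap1]
    rw [Finset.sum_comm]
    refine Finset.sum_congr rfl fun σ _ => ?_
    calc ∑ x, ∑ j, p x * a j * (w σ * (σ.permMatrix ℝ) x j)
        = w σ * ∑ x, ∑ j, p x * a j * (σ.permMatrix ℝ) x j := by
          rw [Finset.mul_sum]
          refine Finset.sum_congr rfl fun x _ => ?_
          rw [Finset.mul_sum]
          exact Finset.sum_congr rfl fun j _ => by ring
      _ = w σ * ∑ j, p (σ.symm j) * a j := by rw [sum_sum_permMatrix]
      _ = ∑ i, w σ * (p (σ.symm i) * a i) := by rw [Finset.mul_sum]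
  constructor
  · rw [key]
    calc ∑ i, sortDesc p i * sortAsc a i
        = ∑ σ : Equiv.Perm (Fin n), w σ * ∑ i, sortDesc p i * sortAsc a i := by
          rw [← Finset.sum_mul, hw1, one_mul]
      _ ≤ _ := Finset.sum_le_sum fun σ _ =>
          mul_le_mul_of_nonneg_left (le_sum_perm p a σ.symm) (hw0 σ)
  · rw [key]
    calc ∑ σ : Equiv.Perm (Fin n), w σ * ∑ j, p (σ.symm j) * a j
        ≤ ∑ σ : Equiv.Perm (Fin n), w σ * ∑ i, sortDesc p i * sortDesc a i :=
          Finset.sum_le_sum fun σ _ =>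
            mul_le_mul_of_nonneg_left (sum_perm_le p a σ.symm) (hw0 σ)
      _ = _ := by rw [← Finset.sum_mul, hw1, one_mul]

/-! ### Trace computation -/

lemma trace_diag (p a : Fin n → ℝ) (M : Matrix (Fin n) (Fin n) ℂ) :
    (diagonal ((RCLike.ofReal ∘ p : Fin n → ℂ)) * Mᴴ * diagonal ((RCLike.ofReal ∘ a : Fin n → ℂ)) * M).trace
      = ((traceF p a M : ℝ) : ℂ) := by
  have hentry : ∀ i, (diagonal ((RCLike.ofReal ∘ p : Fin n → ℂ)) * Mᴴ * diagonal ((RCLike.ofReal ∘ a : Fin n → ℂ)) * M) i i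
      = ∑ j, (((p i * a j * ‖M j i‖^2 : ℝ)) : ℂ) := by
    intro i
    rw [Matrix.mul_apply]
    refine Finset.sum_congr rfl fun j _ => ?_
    rw [Matrix.mul_diagonal, Matrix.diagonal_mul, conjTranspose_apply]
    have : star (M j i) * M j i = ((‖M j i‖^2 : ℝ) : ℂ) := star_mul_self_eq_norm_sq _
    push_cast
    rw [show ((RCLike.ofReal ∘ p : Fin n → ℂ)) i = ((p i : ℝ) : ℂ) from rfl,
      show ((RCLike.ofReal ∘ a : Fin n → ℂ)) j = ((a j : ℝ) : ℂ) from rfl]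
    calc ((p i : ℝ) : ℂ) * star (M j i) * ((a j : ℝ) : ℂ) * M j i
        = ((p i : ℝ) : ℂ) * ((a j : ℝ) : ℂ) * (star (M j i) * M j i) := by ring
      _ = _ := by rw [this]; push_cast; ring
  unfold Matrix.trace
  rw [show Matrix.diag (diagonal ((RCLike.ofReal ∘ p : Fin n → ℂ)) * Mᴴ * diagonal ((RCLike.ofReal ∘ a : Fin n → ℂ)) * M)
      = fun i => (diagonal ((RCLike.ofReal ∘ p : Fin n → ℂ)) * Mᴴ * diagonal ((RCLike.ofReal ∘ a : Fin n → ℂ)) * M) i i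
    from rfl]
  simp only [hentry]
  rw [traceF]
  push_cast
  rfl

end Aux

/-- The achievable values of `tr(UρU†A)` over all unitaries `U` form the closed interval
`[λ↓(ρ)·λ↑(A), λ↓(ρ)·λ↓(A)]`. -/
theorem trace_unitary_orbit_eq_Icc {n : ℕ} (ρ A : Matrix (Fin n) (Fin n) ℂ)
    (hρ : ρ.PosSemidef) (htr : ρ.trace = 1) (hA : A.IsHermitian) :
    {r : ℝ | ∃ U ∈ Matrix.unitaryGroup (Fin n) ℂ, r = ((U * ρ * Uᴴ * A).trace).re} =
      Set.Icc (∑ i, sortDesc hρ.1.eigenvalues i * sortAsc hA.eigenvalues i)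
        (∑ i, sortDesc hρ.1.eigenvalues i * sortDesc hA.eigenvalues i) := by
  set p := hρ.1.eigenvalues with hp
  set a := hA.eigenvalues with ha
  set W : Matrix (Fin n) (Fin n) ℂ := ↑(hρ.1.eigenvectorUnitary) with hWdef
  set V : Matrix (Fin n) (Fin n) ℂ := ↑(hA.eigenvectorUnitary) with hVdef
  have hWmem : W ∈ Matrix.unitaryGroup (Fin n) ℂ := (hρ.1.eigenvectorUnitary).2
  have hVmem : V ∈ Matrix.unitaryGroup (Fin n) ℂ := (hA.eigenvectorUnitary).2
  have hWW : W * Wᴴ = 1 := by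
    rw [← star_eq_conjTranspose]; exact mem_unitaryGroup_iff.mp hWmem
  have hW'W : Wᴴ * W = 1 := by
    rw [← star_eq_conjTranspose]; exact mem_unitaryGroup_iff'.mp hWmem
  have hVV : V * Vᴴ = 1 := by
    rw [← star_eq_conjTranspose]; exact mem_unitaryGroup_iff.mp hVmem
  have hV'V : Vᴴ * V = 1 := by
    rw [← star_eq_conjTranspose]; exact mem_unitaryGroup_iff'.mp hVmem
  -- key : the trace as the functional traceF
  have key : ∀ U ∈ Matrix.unitaryGroup (Fin n) ℂ,
      ((U * ρ * Uᴴ * A).trace).re = traceF p a (Vᴴ * U * W) := by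
    intro U hU
    have hmat : ρ * Uᴴ * A * U =
        W * (diagonal ((RCLike.ofReal ∘ p : Fin n → ℂ)) * (Vᴴ * U * W)ᴴ *
          diagonal ((RCLike.ofReal ∘ a : Fin n → ℂ)) * (Vᴴ * U * W)) * Wᴴ := by
      conv_lhs => rw [hρ.1.spectral_theorem, hA.spectral_theorem]
      simp only [Unitary.conjStarAlgAut_apply, star_eq_conjTranspose, conjTranspose_mul, conjTranspose_conjTranspose,
        Matrix.mul_assoc, ← hWdef, ← hVdef, ← hp, ← ha]
      rw [hWW]
      simp only [Matrix.mul_one]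
    have htr1 : (U * ρ * Uᴴ * A).trace = (ρ * Uᴴ * A * U).trace := by
      rw [show U * ρ * Uᴴ * A = U * (ρ * Uᴴ * A) by simp only [Matrix.mul_assoc],
        Matrix.trace_mul_comm]
    rw [htr1, hmat, Matrix.trace_mul_cycle, ← Matrix.mul_assoc, hW'W, Matrix.one_mul,
      trace_diag]
    exact Complex.ofReal_re _
  ext r
  simp only [Set.mem_setOf_eq]
  constructor
  · rintro ⟨U, hU, rfl⟩
    rw [key U hU]
    have hMmem : Vᴴ * U * W ∈ Matrix.unitaryGroup (Fin n) ℂ := by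
      rw [← star_eq_conjTranspose]
      exact Submonoid.mul_mem _ (Submonoid.mul_mem _ (Unitary.star_mem hVmem) hU) hWmem
    exact traceF_mem_Icc p a hMmem
  · intro hr
    obtain ⟨σlo, hσlo⟩ := exists_perm_lo p a
    obtain ⟨σhi, hσhi⟩ := exists_perm_hi p a
    obtain ⟨Q, hQc, hQm, hQ0, hQ1⟩ := exists_unitary_path (σhi * σlo⁻¹)
    set N : ℝ → Matrix (Fin n) (Fin n) ℂ := fun t => σlo.permMatrix ℂ * Q t with hN
    have hNmem : ∀ t, N t ∈ Matrix.unitaryGroup (Fin n) ℂ := fun t =>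
      Submonoid.mul_mem _ (permMatrix_mem_unitaryGroup' σlo) (hQm t)
    have hNc : Continuous (fun t => traceF p a (N t)) :=
      (traceF_continuous p a).comp (continuous_const.mul hQc)
    have hg0 : traceF p a (N 0) = ∑ i, sortDesc p i * sortAsc a i := by
      rw [hN]; simp only [hQ0, Matrix.mul_one]
      rw [traceF_perm, hσlo]
    have hg1 : traceF p a (N 1) = ∑ i, sortDesc p i * sortDesc a i := by
      rw [hN]; simp only [hQ1]
      rw [permMatrix_mul', show σhi * σlo⁻¹ * σlo = σhi by group, traceF_perm, hσhi]
    have hsub := intermediate_value_Icc (by norm_num : (0:ℝ) ≤ 1) hNc.continuousOn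
    rw [hg0, hg1] at hsub
    obtain ⟨t, _, hgt⟩ := hsub hr
    refine ⟨V * N t * Wᴴ, ?_, ?_⟩
    · rw [← star_eq_conjTranspose]
      exact Submonoid.mul_mem _ (Submonoid.mul_mem _ hVmem (hNmem t)) (Unitary.star_mem hWmem)
    · have hmem : V * N t * Wᴴ ∈ Matrix.unitaryGroup (Fin n) ℂ := by
        rw [← star_eq_conjTranspose]
        exact Submonoid.mul_mem _ (Submonoid.mul_mem _ hVmem (hNmem t)) (Unitary.star_mem hWmem)
      rw [key _ hmem]
      have : Vᴴ * (V * N t * Wᴴ) * W = N t := by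
        calc Vᴴ * (V * N t * Wᴴ) * W = Vᴴ * V * N t * (Wᴴ * W) := by
              simp only [Matrix.mul_assoc]
          _ = N t := by rw [hV'V, hW'W, Matrix.one_mul, Matrix.mul_one]
      rw [this]
      exact hgt.symm
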